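/- Fix a real ξ > 0, an integer M ≥ 1, and positive reals C and a. Let W be a random variable with probability density function f_W(x) = (ξ^M / ((M−1)! · C^ξ)) · x^{ξ−1} · (ln(C/x))^{M−1} on (0, C] (zero elsewhere), and let l be a random variable, independent of W, with probability density function f_l(t) = (ξ / a^ξ) · t^{ξ−1} on [0, a] (zero elsewhere). Then the product W · l has probability density function f(x) = (ξ^{M+1} / (M! · (C·a)^ξ)) · x^{ξ−1} · (ln(C·a / x))^{M} on (0, C·a] (zero elsewhere). -/

import Mathlib

open MeasureTheory ProbabilityTheory
open scoped ENNReal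

lemma log_pow_int (M : ℕ) (hM : 1 ≤ M) {b C : ℝ} (hb : 0 < b) (hbC : b ≤ C) :
    ∫ w in b..C, (Real.log C - Real.log w) ^ (M - 1) * w⁻¹ =
      (Real.log C - Real.log b) ^ M / M := by
  have hder : ∀ w ∈ Set.uIcc b C, HasDerivAt
      (fun w => -((Real.log C - Real.log w) ^ M / M))
      ((Real.log C - Real.log w) ^ (M - 1) * w⁻¹) w := by
    intro w hw
    rw [Set.uIcc_of_le hbC] at hw
    have hw0 : w ≠ 0 := (lt_of_lt_of_le hb hw.1).ne'
    have h1 : HasDerivAt (fun w => Real.log C - Real.log w) (-w⁻¹) w :=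
      HasDerivAt.const_sub (Real.log C) (Real.hasDerivAt_log hw0)
    have h2 := (h1.pow M).div_const (M : ℝ)
    have h3 := h2.neg
    refine h3.congr_deriv ?_
    have hM0 : (M : ℝ) ≠ 0 := Nat.cast_ne_zero.2 (by omega)
    field_simp
  have hcont : IntervalIntegrable
      (fun w => (Real.log C - Real.log w) ^ (M - 1) * w⁻¹) volume b C := by
    apply ContinuousOn.intervalIntegrable
    have hne : ∀ w ∈ Set.uIcc b C, w ≠ 0 := by
      intro w hw
      rw [Set.uIcc_of_le hbC] at hw
      exact (lt_of_lt_of_le hb hw.1).ne'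
    apply ContinuousOn.mul
    · exact ((continuousOn_const.sub (Real.continuousOn_log.mono hne)).pow _)
    · exact ContinuousOn.inv₀ continuousOn_id hne
  have := intervalIntegral.integral_eq_sub_of_hasDerivAt hder hcont
  rw [this]
  have : Real.log C - Real.log C = 0 := by ring
  rw [this, zero_pow (by omega : M ≠ 0)]
  ring

lemma key_integral (ξ : ℝ) (hξ : 0 < ξ) (M : ℕ) (hM : 1 ≤ M)
    (C a : ℝ) (hC : 0 < C) (ha : 0 < a) (x : ℝ) (hx : x ≠ 0) :
    ∫⁻ w, (ENNReal.ofReal (if 0 < w ∧ w ≤ C then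
        (ξ ^ M / ((Nat.factorial (M - 1) : ℝ) * C ^ ξ)) * w ^ (ξ - 1) *
          (Real.log (C / w)) ^ (M - 1) else 0)) *
      ENNReal.ofReal w⁻¹ *
      ENNReal.ofReal (if 0 ≤ w⁻¹ * x ∧ w⁻¹ * x ≤ a then
        (ξ / a ^ ξ) * (w⁻¹ * x) ^ (ξ - 1) else 0) =
    ENNReal.ofReal (if 0 < x ∧ x ≤ C * a then
        (ξ ^ (M + 1) / ((Nat.factorial M : ℝ) * (C * a) ^ ξ)) * x ^ (ξ - 1) *
          (Real.log (C * a / x)) ^ M else 0) := by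
  rcases lt_or_gt_of_ne hx with hxneg | hxpos
  · -- x < 0 : everything vanishes
    rw [if_neg (by intro h; exact absurd h.1 (not_lt.2 hxneg.le))]
    rw [ENNReal.ofReal_zero, ← lintegral_zero]
    congr 1; funext w
    by_cases hw : 0 < w ∧ w ≤ C
    · have : ¬ (0 ≤ w⁻¹ * x ∧ w⁻¹ * x ≤ a) := by
        intro h
        have : w⁻¹ * x < 0 := mul_neg_of_pos_of_neg (inv_pos.2 hw.1) hxneg
        linarith [h.1]
      rw [if_neg this, ENNReal.ofReal_zero, mul_zero]
    · rw [if_neg hw, ENNReal.ofReal_zero, zero_mul, zero_mul]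
  · -- x > 0
    set K : ℝ := (ξ ^ M / ((Nat.factorial (M - 1) : ℝ) * C ^ ξ)) * (ξ / a ^ ξ) * x ^ (ξ - 1)
      with hK
    have hKnn : 0 ≤ K := by
      apply mul_nonneg (mul_nonneg _ _) (Real.rpow_nonneg hxpos.le _)
      · positivity
      · positivity
    -- pointwise identification with an indicator function
    have hpt : ∀ w, (ENNReal.ofReal (if 0 < w ∧ w ≤ C then
        (ξ ^ M / ((Nat.factorial (M - 1) : ℝ) * C ^ ξ)) * w ^ (ξ - 1) *
          (Real.log (C / w)) ^ (M - 1) else 0)) *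
      ENNReal.ofReal w⁻¹ *
      ENNReal.ofReal (if 0 ≤ w⁻¹ * x ∧ w⁻¹ * x ≤ a then
        (ξ / a ^ ξ) * (w⁻¹ * x) ^ (ξ - 1) else 0) =
      ENNReal.ofReal (Set.indicator (Set.Icc (x / a) C)
        (fun w => K * ((Real.log C - Real.log w) ^ (M - 1) * w⁻¹)) w) := by
      intro w
      by_cases hw : 0 < w ∧ w ≤ C
      · by_cases hw2 : 0 ≤ w⁻¹ * x ∧ w⁻¹ * x ≤ a
        · have hwmem : w ∈ Set.Icc (x / a) C := by
            constructor
            · rw [div_le_iff₀ ha]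
              have := hw2.2
              rw [inv_mul_le_iff₀ hw.1] at this
              linarith [this]
            · exact hw.2
          rw [Set.indicator_of_mem hwmem, if_pos hw, if_pos hw2]
          have hlog : Real.log (C / w) = Real.log C - Real.log w :=
            Real.log_div hC.ne' hw.1.ne'
          have hlognn : 0 ≤ Real.log (C / w) :=
            Real.log_nonneg ((one_le_div hw.1).2 hw.2)
          have hAnn : 0 ≤ ξ ^ M / ((Nat.factorial (M - 1) : ℝ) * C ^ ξ) * w ^ (ξ - 1) *
              (Real.log (C / w)) ^ (M - 1) := by
            apply mul_nonneg (mul_nonneg (by positivity) (Real.rpow_nonneg hw.1.le _))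
            exact pow_nonneg hlognn _
          rw [← ENNReal.ofReal_mul hAnn,
            ← ENNReal.ofReal_mul (mul_nonneg hAnn (inv_nonneg.2 hw.1.le))]
          congr 1
          have hrp : (w⁻¹ * x) ^ (ξ - 1) = w⁻¹ ^ (ξ - 1) * x ^ (ξ - 1) :=
            Real.mul_rpow (inv_nonneg.2 hw.1.le) hxpos.le
          have hww : w ^ (ξ - 1) * w⁻¹ ^ (ξ - 1) = 1 := by
            rw [← Real.mul_rpow hw.1.le (inv_nonneg.2 hw.1.le), mul_inv_cancel₀ hw.1.ne',
              Real.one_rpow]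
          rw [hlog, hrp, hK]
          linear_combination (ξ ^ M / ((Nat.factorial (M - 1) : ℝ) * C ^ ξ) * (ξ / a ^ ξ) *
            x ^ (ξ - 1) * (Real.log C - Real.log w) ^ (M - 1) * w⁻¹) * hww
        · rw [if_neg hw2, ENNReal.ofReal_zero, mul_zero]
          have : w ∉ Set.Icc (x / a) C := by
            intro hmem
            apply hw2
            have hw0 : 0 < w := hw.1
            constructor
            · positivity
            · rw [inv_mul_le_iff₀ hw0]
              rw [Set.mem_Icc, div_le_iff₀ ha] at hmem
              linarith [hmem.1]
          rw [Set.indicator_of_notMem this, ENNReal.ofReal_zero]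
      · rw [if_neg hw, ENNReal.ofReal_zero, zero_mul, zero_mul]
        have : w ∉ Set.Icc (x / a) C := by
          intro hmem
          rw [Set.mem_Icc] at hmem
          apply hw
          constructor
          · calc (0:ℝ) < x / a := by positivity
              _ ≤ w := hmem.1
          · exact hmem.2
        rw [Set.indicator_of_notMem this, ENNReal.ofReal_zero]
    simp only [hpt]
    by_cases hxCa : x ≤ C * a
    · have hba : 0 < x / a := by positivity
      have hbC : x / a ≤ C := by rw [div_le_iff₀ ha]; linarith
      -- nonnegativity of the indicator
      have hnn : ∀ w, 0 ≤ Set.indicator (Set.Icc (x / a) C)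
          (fun w => K * ((Real.log C - Real.log w) ^ (M - 1) * w⁻¹)) w := by
        intro w
        apply Set.indicator_nonneg
        intro w hw
        rw [Set.mem_Icc] at hw
        have hw0 : 0 < w := lt_of_lt_of_le hba hw.1
        apply mul_nonneg hKnn
        apply mul_nonneg (pow_nonneg _ _) (inv_nonneg.2 hw0.le)
        have : Real.log w ≤ Real.log C := Real.log_le_log hw0 hw.2
        linarith
      have hint : IntegrableOn
          (fun w => K * ((Real.log C - Real.log w) ^ (M - 1) * w⁻¹))
          (Set.Icc (x / a) C) volume := by
        apply ContinuousOn.integrableOn_Icc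
        have hne : ∀ w ∈ Set.Icc (x / a) C, w ≠ 0 := fun w hw =>
          (lt_of_lt_of_le hba hw.1).ne'
        exact continuousOn_const.mul
          (((continuousOn_const.sub (Real.continuousOn_log.mono hne)).pow _).mul
            (ContinuousOn.inv₀ continuousOn_id hne))
      rw [← MeasureTheory.ofReal_integral_eq_lintegral_ofReal
          (hint.integrable_indicator measurableSet_Icc)
          (Filter.Eventually.of_forall hnn)]
      rw [MeasureTheory.integral_indicator measurableSet_Icc]
      rw [MeasureTheory.integral_Icc_eq_integral_Ioc,
        ← intervalIntegral.integral_of_le hbC]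
      rw [intervalIntegral.integral_const_mul, log_pow_int M hM hba hbC]
      rw [if_pos ⟨hxpos, hxCa⟩]
      congr 1
      have h1 : Real.log C - Real.log (x / a) = Real.log (C * a / x) := by
        rw [Real.log_div hx ha.ne', Real.log_div (by positivity : C * a ≠ 0) hx,
          Real.log_mul hC.ne' ha.ne']
        ring
      rw [h1, hK]
      have h2 : (Nat.factorial M : ℝ) = (M : ℝ) * (Nat.factorial (M - 1) : ℝ) := by
        rw [← Nat.mul_factorial_pred (by omega : M ≠ 0)]
        push_cast
        ring
      have h3 : (C * a) ^ ξ = C ^ ξ * a ^ ξ := Real.mul_rpow hC.le ha.le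
      have hM0 : (M : ℝ) ≠ 0 := Nat.cast_ne_zero.2 (by omega)
      have hf0 : (Nat.factorial (M - 1) : ℝ) ≠ 0 := Nat.cast_ne_zero.2 (Nat.factorial_ne_zero _)
      rw [h2, h3]
      field_simp
      ring
    · -- x > C * a : Icc is empty
      rw [if_neg (fun h => hxCa h.2)]
      have hempty : Set.Icc (x / a) C = ∅ := by
        apply Set.Icc_eq_empty
        rw [not_le, lt_div_iff₀ ha]
        linarith [not_le.1 hxCa]
      simp [hempty]


/-- Inductive step of Theorem 2 (Appendix A): multiplying the cascade of `M`
misaligned links by one further independent misaligned link yields the cascaded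
density for `M + 1` links. -/
theorem misalignment_cascade_inductive_step
    {Ω : Type*} [MeasurableSpace Ω] (P : Measure Ω) [IsProbabilityMeasure P]
    (ξ : ℝ) (hξ : 0 < ξ) (M : ℕ) (hM : 1 ≤ M)
    (C a : ℝ) (hC : 0 < C) (ha : 0 < a)
    (W l : Ω → ℝ) (hW : Measurable W) (hl : Measurable l)
    (hindep : IndepFun W l P)
    (hdW : Measure.map W P = volume.withDensity (fun x =>
      ENNReal.ofReal (if 0 < x ∧ x ≤ C then
        (ξ ^ M / ((Nat.factorial (M - 1) : ℝ) * C ^ ξ)) * x ^ (ξ - 1) *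
          (Real.log (C / x)) ^ (M - 1)
      else 0)))
    (hdl : Measure.map l P = volume.withDensity (fun t =>
      ENNReal.ofReal (if 0 ≤ t ∧ t ≤ a then (ξ / a ^ ξ) * t ^ (ξ - 1) else 0))) :
    Measure.map (fun ω => W ω * l ω) P = volume.withDensity (fun x =>
      ENNReal.ofReal (if 0 < x ∧ x ≤ C * a then
        (ξ ^ (M + 1) / ((Nat.factorial M : ℝ) * (C * a) ^ ξ)) * x ^ (ξ - 1) *
          (Real.log (C * a / x)) ^ M
      else 0)) := by
  classical
  set FW : ℝ → ℝ≥0∞ := fun w => ENNReal.ofReal (if 0 < w ∧ w ≤ C then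
      (ξ ^ M / ((Nat.factorial (M - 1) : ℝ) * C ^ ξ)) * w ^ (ξ - 1) *
        (Real.log (C / w)) ^ (M - 1) else 0) with hFWdef
  set FL : ℝ → ℝ≥0∞ := fun t =>
    ENNReal.ofReal (if 0 ≤ t ∧ t ≤ a then (ξ / a ^ ξ) * t ^ (ξ - 1) else 0) with hFLdef
  set F : ℝ → ℝ≥0∞ := fun x => ENNReal.ofReal (if 0 < x ∧ x ≤ C * a then
      (ξ ^ (M + 1) / ((Nat.factorial M : ℝ) * (C * a) ^ ξ)) * x ^ (ξ - 1) *
        (Real.log (C * a / x)) ^ M else 0) with hFdef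
  have mFW : Measurable FW := by
    apply ENNReal.measurable_ofReal.comp
    apply Measurable.ite (measurableSet_Ioc (a := (0:ℝ)) (b := C))
    · exact (measurable_const.mul ((by fun_prop : Measurable fun x : ℝ => x ^ (ξ - 1)))).mul
        ((Real.measurable_log.comp (measurable_const.div measurable_id)).pow_const _)
    · exact measurable_const
  have mFL : Measurable FL := by
    apply ENNReal.measurable_ofReal.comp
    apply Measurable.ite (measurableSet_Icc (a := (0:ℝ)) (b := a))
    · exact measurable_const.mul ((by fun_prop : Measurable fun x : ℝ => x ^ (ξ - 1)))
    · exact measurable_const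
  have mF : Measurable F := by
    apply ENNReal.measurable_ofReal.comp
    apply Measurable.ite (measurableSet_Ioc (a := (0:ℝ)) (b := C * a))
    · exact (measurable_const.mul ((by fun_prop : Measurable fun x : ℝ => x ^ (ξ - 1)))).mul
        ((Real.measurable_log.comp (measurable_const.div measurable_id)).pow_const _)
    · exact measurable_const
  have hjoint : P.map (fun ω => (W ω, l ω)) = (P.map W).prod (P.map l) :=
    (indepFun_iff_map_prod_eq_prod_map_map hW.aemeasurable hl.aemeasurable).1 hindep
  have hmul : Measurable (fun p : ℝ × ℝ => p.1 * p.2) := measurable_fst.mul measurable_snd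
  have hmap : Measure.map (fun ω => W ω * l ω) P
      = Measure.map (fun p : ℝ × ℝ => p.1 * p.2)
        ((volume.withDensity FW).prod (volume.withDensity FL)) := by
    rw [← hdW, ← hdl, ← hjoint, Measure.map_map hmul (hW.prodMk hl)]
    rfl
  rw [hmap]
  ext s hs
  rw [Measure.map_apply hmul hs, Measure.prod_apply (hmul hs), withDensity_apply _ hs]
  have hinner : ∀ w : ℝ, (volume.withDensity FL)
      (Prod.mk w ⁻¹' ((fun p : ℝ × ℝ => p.1 * p.2) ⁻¹' s))
      = ∫⁻ t, FL t * s.indicator 1 (w * t) ∂volume := by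
    intro w
    have hpre : (Prod.mk w ⁻¹' ((fun p : ℝ × ℝ => p.1 * p.2) ⁻¹' s))
        = (fun t => w * t) ⁻¹' s := rfl
    have hms : MeasurableSet ((fun t => w * t) ⁻¹' s) := (measurable_const_mul w) hs
    rw [hpre, withDensity_apply _ hms, ← lintegral_indicator hms]
    congr 1
    funext t
    by_cases ht : w * t ∈ s
    · simp [Set.indicator_of_mem, ht]
    · simp [Set.indicator_of_notMem, ht]
  simp_rw [hinner]
  have mind : Measurable (s.indicator (1 : ℝ → ℝ≥0∞)) := measurable_one.indicator hs
  have mG : Measurable (fun w : ℝ => ∫⁻ t, FL t * s.indicator 1 (w * t) ∂volume) := by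
    apply Measurable.lintegral_prod_right (f := fun w t => FL t * s.indicator 1 (w * t))
    exact (mFL.comp measurable_snd).mul (mind.comp hmul)
  rw [lintegral_withDensity_eq_lintegral_mul volume mFW mG]
  have hsub : ∀ w : ℝ, FW w * ∫⁻ t, FL t * s.indicator 1 (w * t) ∂volume
      = ∫⁻ x, FW w * ENNReal.ofReal w⁻¹ * FL (w⁻¹ * x) * s.indicator 1 x ∂volume := by
    intro w
    by_cases hw : 0 < w ∧ w ≤ C
    · have hw0 : w ≠ 0 := hw.1.ne'
      have hg : Measurable (fun t => FL t * s.indicator 1 (w * t)) :=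
        mFL.mul (mind.comp (measurable_const_mul w))
      have h1 : ∫⁻ x, FL (w⁻¹ * x) * s.indicator 1 x ∂volume
          = ENNReal.ofReal w * ∫⁻ t, FL t * s.indicator 1 (w * t) ∂volume := by
        have h2 : ∫⁻ x, (fun t => FL t * s.indicator 1 (w * t)) (w⁻¹ * x) ∂volume
            = ∫⁻ y, FL y * s.indicator 1 (w * y)
                ∂(Measure.map (fun x : ℝ => w⁻¹ * x) volume) := by
          rw [lintegral_map hg (measurable_const_mul _)]
        have h3 : Measure.map (fun x : ℝ => w⁻¹ * x) volume
            = ENNReal.ofReal |(w⁻¹)⁻¹| • volume := Real.map_volume_mul_left (inv_ne_zero hw0)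
        have h4 : |(w⁻¹)⁻¹| = w := by rw [inv_inv, abs_of_pos hw.1]
        have h5 : ∀ x : ℝ, (fun t => FL t * s.indicator 1 (w * t)) (w⁻¹ * x)
            = FL (w⁻¹ * x) * s.indicator 1 x := by
          intro x
          simp only []
          rw [mul_inv_cancel_left₀ hw0]
        calc ∫⁻ x, FL (w⁻¹ * x) * s.indicator 1 x ∂volume
            = ∫⁻ x, (fun t => FL t * s.indicator 1 (w * t)) (w⁻¹ * x) ∂volume := by
              exact lintegral_congr fun x => (h5 x).symm
          _ = ∫⁻ y, FL y * s.indicator 1 (w * y)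
                ∂(Measure.map (fun x : ℝ => w⁻¹ * x) volume) := h2
          _ = ENNReal.ofReal w * ∫⁻ t, FL t * s.indicator 1 (w * t) ∂volume := by
              rw [h3, h4, lintegral_smul_measure, smul_eq_mul]
      calc FW w * ∫⁻ t, FL t * s.indicator 1 (w * t) ∂volume
          = (FW w * ENNReal.ofReal w⁻¹) *
            (ENNReal.ofReal w * ∫⁻ t, FL t * s.indicator 1 (w * t) ∂volume) := by
            rw [mul_assoc, ← mul_assoc (ENNReal.ofReal w⁻¹),
              ← ENNReal.ofReal_mul (inv_nonneg.2 hw.1.le), inv_mul_cancel₀ hw0,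
              ENNReal.ofReal_one, one_mul]
        _ = (FW w * ENNReal.ofReal w⁻¹) *
            ∫⁻ x, FL (w⁻¹ * x) * s.indicator 1 x ∂volume := by rw [h1]
        _ = ∫⁻ x, FW w * ENNReal.ofReal w⁻¹ * FL (w⁻¹ * x) * s.indicator 1 x ∂volume := by
            have hm2 : Measurable fun x : ℝ => FL (w⁻¹ * x) * s.indicator 1 x :=
              (mFL.comp (measurable_const_mul w⁻¹)).mul mind
            rw [← lintegral_const_mul _ hm2]
            exact lintegral_congr fun x => by ring
    · have hFW0 : FW w = 0 := by
        rw [hFWdef]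
        simp only [if_neg hw, ENNReal.ofReal_zero]
      simp [hFW0]
  simp only [Pi.mul_apply]
  simp_rw [hsub]
  have mφ : Measurable (fun p : ℝ × ℝ =>
      FW p.1 * ENNReal.ofReal p.1⁻¹ * FL (p.1⁻¹ * p.2) * s.indicator 1 p.2) := by
    refine (((mFW.comp measurable_fst).mul
      (ENNReal.measurable_ofReal.comp (measurable_fst.inv))).mul
      (mFL.comp (measurable_fst.inv.mul measurable_snd))).mul (mind.comp measurable_snd)
  rw [lintegral_lintegral_swap mφ.aemeasurable]
  have hinner2 : ∀ x : ℝ,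
      (∫⁻ w, FW w * ENNReal.ofReal w⁻¹ * FL (w⁻¹ * x) * s.indicator 1 x ∂volume)
      = (∫⁻ w, FW w * ENNReal.ofReal w⁻¹ * FL (w⁻¹ * x) ∂volume) * s.indicator 1 x := by
    intro x
    have hm3 : Measurable fun w : ℝ => FW w * ENNReal.ofReal w⁻¹ * FL (w⁻¹ * x) :=
      (mFW.mul (ENNReal.measurable_ofReal.comp measurable_inv)).mul
        (mFL.comp (measurable_inv.mul measurable_const))
    rw [lintegral_mul_const _ hm3]
  simp_rw [hinner2]
  have hkey : ∀ᵐ x : ℝ ∂volume,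
      (∫⁻ w, FW w * ENNReal.ofReal w⁻¹ * FL (w⁻¹ * x) ∂volume) * s.indicator 1 x
        = F x * s.indicator 1 x := by
    filter_upwards [compl_mem_ae_iff.2 (Real.volume_singleton (a := (0:ℝ)))] with x hx
    have hx0 : x ≠ 0 := hx
    rw [key_integral ξ hξ M hM C a hC ha x hx0]
  rw [lintegral_congr_ae hkey, ← lintegral_indicator hs]
  congr 1
  funext x
  by_cases hxs : x ∈ s
  · simp [Set.indicator_of_mem, hxs]
  · simp [Set.indicator_of_notMem, hxs]
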